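/- arXiv:2406.11693 — 3 statements merged into one kernel-verified Lean document; each statement's English description precedes it below -/
import Mathlib

section
/- Let α ≥ 0 and let Λ₁ be the ground-state eigenvalue of −g'' = Λ g on [0,1] with Robin conditions ±g' + α g = 0 at z = 0, 1. Then Λ₁ ≥ ((−α + √(α² + 8π²α)) / (4π))². -/
open Real Set

/-- `Λ` is an eigenvalue of the Robin problem `-g'' = Λ g` on `[0,1]` with
boundary conditions `-g'(0) + α g(0) = 0` and `g'(1) + α g(1) = 0`. -/
def IsRobinEigenvalue (α Λ : ℝ) : Prop :=
  ∃ g : ℝ → ℝ, ContDiff ℝ 2 g ∧ (∃ z ∈ Set.Icc (0:ℝ) 1, g z ≠ 0) ∧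
    (∀ z ∈ Set.Icc (0:ℝ) 1, deriv (deriv g) z = -Λ * g z) ∧
    -(deriv g 0) + α * g 0 = 0 ∧ deriv g 1 + α * g 1 = 0

lemma robin_nonpos_aux (α Λ : ℝ) (hα : 0 ≤ α) (h : IsRobinEigenvalue α Λ)
    (hΛ : Λ < 0 ∨ (Λ = 0 ∧ 0 < α)) : False := by
  obtain ⟨g, hg, ⟨z₀, hz₀, hgz₀⟩, hODE, hbc0, hbc1⟩ := h
  have hΛ0 : Λ ≤ 0 := by rcases hΛ with h1 | ⟨h1, _⟩ <;> simp [h1, le_of_lt, h1.le]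
  have hgd : Differentiable ℝ g := hg.differentiable (by norm_num)
  have hg1 : ContDiff ℝ 1 (deriv g) := by
    have := (contDiff_succ_iff_deriv.mp (by exact_mod_cast hg : ContDiff ℝ ((1:ℕ)+1) g)).2.2
    exact_mod_cast this
  have hgd' : Differentiable ℝ (deriv g) := hg1.differentiable one_ne_zero
  have hcd : Continuous (deriv g) := hgd'.continuous
  have hg' : ∀ z, HasDerivAt g (deriv g z) z := fun z => (hgd z).hasDerivAt
  have hg'' : ∀ z, HasDerivAt (deriv g) (deriv (deriv g) z) z := fun z => (hgd' z).hasDerivAt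
  set q : ℝ → ℝ := fun z => g z * deriv g z with hqdef
  have hqD : ∀ z, HasDerivAt q (g z * deriv (deriv g) z + deriv g z * deriv g z) z := by
    intro z
    have : HasDerivAt (fun y => g y * deriv g y) _ z := (hg' z).mul (hg'' z)
    convert this using 1
    ring
  have hqderiv : ∀ z, deriv q z = g z * deriv (deriv g) z + deriv g z * deriv g z :=
    fun z => (hqD z).deriv
  have hqc : Continuous q := hgd.continuous.mul hcd
  have hmono : MonotoneOn q (Icc 0 1) := by
    apply monotoneOn_of_deriv_nonneg (convex_Icc 0 1) hqc.continuousOn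
    · intro z _
      exact (hqD z).differentiableAt.differentiableWithinAt
    · intro z hz
      rw [interior_Icc] at hz
      rw [hqderiv z, hODE z (Ioo_subset_Icc_self hz)]
      nlinarith [sq_nonneg (deriv g z), sq_nonneg (g z),
        mul_nonneg (neg_nonneg.2 hΛ0) (sq_nonneg (g z))]
  have hA' : deriv g 0 = α * g 0 := by linarith
  have hB' : deriv g 1 = -(α * g 1) := by linarith
  have hq0 : 0 ≤ q 0 := by
    simp only [hqdef, hA']
    nlinarith [sq_nonneg (g 0), mul_nonneg hα (sq_nonneg (g 0))]
  have hq1 : q 1 ≤ 0 := by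
    simp only [hqdef, hB']
    nlinarith [mul_nonneg hα (sq_nonneg (g 1))]
  have h01 : q 0 ≤ q 1 := hmono (by norm_num) (by norm_num) zero_le_one
  have hqz : ∀ z ∈ Icc (0:ℝ) 1, q z = 0 := by
    intro z hz
    have h1 : q z ≤ q 1 := hmono hz (by norm_num) hz.2
    have h2 : q 0 ≤ q z := hmono (by norm_num) hz hz.1
    linarith
  have hz0 : ∀ z ∈ Ioo (0:ℝ) 1, deriv g z * deriv g z = Λ * (g z * g z) := by
    intro z hz
    have hev : q =ᶠ[nhds z] (fun _ => (0:ℝ)) := by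
      filter_upwards [Ioo_mem_nhds hz.1 hz.2] with y hy using hqz y (Ioo_subset_Icc_self hy)
    have hd0 : deriv q z = 0 := by rw [hev.deriv_eq]; simp
    rw [hqderiv z, hODE z (Ioo_subset_Icc_self hz)] at hd0
    nlinarith [hd0]
  rcases hΛ with hneg | ⟨rfl, hαpos⟩
  · have hg0 : EqOn g 0 (Ioo 0 1) := by
      intro z hz
      have h1 := hz0 z hz
      have h2 : g z * g z = 0 := by nlinarith [mul_self_nonneg (deriv g z), mul_self_nonneg (g z)]
      simpa using mul_self_eq_zero.mp h2
    have hcl : EqOn g 0 (closure (Ioo (0:ℝ) 1)) := hg0.closure hgd.continuous continuous_const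
    rw [closure_Ioo (by norm_num : (0:ℝ) ≠ 1)] at hcl
    exact hgz₀ (hcl hz₀)
  · have hg'0 : EqOn (deriv g) 0 (Ioo 0 1) := by
      intro z hz
      have h1 := hz0 z hz
      have h2 : deriv g z * deriv g z = 0 := by linarith [h1]
      simpa using mul_self_eq_zero.mp h2
    have hcl : EqOn (deriv g) 0 (closure (Ioo (0:ℝ) 1)) := hg'0.closure hcd continuous_const
    rw [closure_Ioo (by norm_num : (0:ℝ) ≠ 1)] at hcl
    have hd0 : deriv g 0 = 0 := hcl (by norm_num)
    have hG0 : g 0 = 0 := by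
      have hm : α * g 0 = 0 := by rw [hd0] at hbc0; linarith
      exact (mul_eq_zero.mp hm).resolve_left (ne_of_gt hαpos)
    have hconst : ∀ z ∈ Icc (0:ℝ) 1, g z = g 0 := by
      apply constant_of_has_deriv_right_zero hgd.continuous.continuousOn
      intro x hx
      have hx' : deriv g x = 0 := hcl ⟨hx.1, hx.2.le⟩
      have := hg' x
      rw [hx'] at this
      exact this.hasDerivWithinAt
    exact hgz₀ (by rw [hconst z₀ hz₀, hG0])

lemma robin_wronskian (α ν : ℝ) (hν : 0 < ν)
    (h : IsRobinEigenvalue α (ν^2))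
    (hF : (α^2 - ν^2) * Real.sin ν + 2*α*ν*Real.cos ν ≠ 0) : False := by
  obtain ⟨g, hg, ⟨z₀, hz₀, hgz₀⟩, hODE, hbc0, hbc1⟩ := h
  have hgd : Differentiable ℝ g := hg.differentiable (by norm_num)
  have hg1 : ContDiff ℝ 1 (deriv g) := by
    have := (contDiff_succ_iff_deriv.mp (by exact_mod_cast hg : ContDiff ℝ ((1:ℕ)+1) g)).2.2
    exact_mod_cast this
  have hgd' : Differentiable ℝ (deriv g) := hg1.differentiable one_ne_zero
  have hcd : Continuous (deriv g) := hgd'.continuous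
  have hg' : ∀ z, HasDerivAt g (deriv g z) z := fun z => (hgd z).hasDerivAt
  have hg'' : ∀ z, HasDerivAt (deriv g) (deriv (deriv g) z) z := fun z => (hgd' z).hasDerivAt
  have hc : ∀ z : ℝ, HasDerivAt (fun y => Real.cos (ν*y)) (-Real.sin (ν*z) * ν) z := by
    intro z
    simpa [Function.comp_def] using (Real.hasDerivAt_cos (ν*z)).comp z ((hasDerivAt_id z).const_mul ν)
  have hs : ∀ z : ℝ, HasDerivAt (fun y => Real.sin (ν*y)) (Real.cos (ν*z) * ν) z := by
    intro z
    simpa [Function.comp_def] using (Real.hasDerivAt_sin (ν*z)).comp z ((hasDerivAt_id z).const_mul ν)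
  -- the two Wronskians
  have key : ∀ W : ℝ → ℝ, ContinuousOn W (Icc 0 1) → (∀ z ∈ Icc (0:ℝ) 1, HasDerivAt W 0 z) →
      ∀ x ∈ Icc (0:ℝ) 1, W x = W 0 := by
    intro W hWc hWd
    exact constant_of_has_deriv_right_zero hWc
      (fun x hx => (hWd x ⟨hx.1, hx.2.le⟩).hasDerivWithinAt)
  have hW₁ : ∀ x ∈ Icc (0:ℝ) 1,
      deriv g x * Real.cos (ν*x) + g x * (Real.sin (ν*x) * ν)
        = deriv g 0 * Real.cos (ν*0) + g 0 * (Real.sin (ν*0) * ν) := by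
    apply key
    · apply Continuous.continuousOn
      exact (hcd.mul (Real.continuous_cos.comp (continuous_const.mul continuous_id))).add
        (hgd.continuous.mul ((Real.continuous_sin.comp (continuous_const.mul continuous_id)).mul
          continuous_const))
    · intro z hz
      have h1 : HasDerivAt (fun y => deriv g y * Real.cos (ν*y) + g y * (Real.sin (ν*y) * ν)) _ z :=
        ((hg'' z).mul (hc z)).add ((hg' z).mul ((hs z).mul_const ν))
      rw [hODE z hz] at h1
      convert h1 using 1
      ring
  have hW₂ : ∀ x ∈ Icc (0:ℝ) 1,
      deriv g x * Real.sin (ν*x) - g x * (Real.cos (ν*x) * ν)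
        = deriv g 0 * Real.sin (ν*0) - g 0 * (Real.cos (ν*0) * ν) := by
    apply key
    · apply Continuous.continuousOn
      exact (hcd.mul (Real.continuous_sin.comp (continuous_const.mul continuous_id))).sub
        (hgd.continuous.mul ((Real.continuous_cos.comp (continuous_const.mul continuous_id)).mul
          continuous_const))
    · intro z hz
      have h1 : HasDerivAt (fun y => deriv g y * Real.sin (ν*y) - g y * (Real.cos (ν*y) * ν)) _ z :=
        ((hg'' z).mul (hs z)).sub ((hg' z).mul ((hc z).mul_const ν))
      rw [hODE z hz] at h1
      convert h1 using 1
      ring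
  have hA' : deriv g 0 = α * g 0 := by linarith
  have hB' : deriv g 1 = -(α * g 1) := by linarith
  have E1 := hW₁ 1 (by norm_num)
  have E2 := hW₂ 1 (by norm_num)
  simp only [mul_one, mul_zero, Real.cos_zero, Real.sin_zero, zero_mul] at E1 E2
  rw [hA'] at E1
  rw [hB'] at E1 E2
  have hg1z : g 1 = 0 := by
    have hkey : g 1 * ((α^2 - ν^2) * Real.sin ν + 2*α*ν*Real.cos ν) = 0 := by
      linear_combination (-ν) * E1 + (-α) * E2
    exact (mul_eq_zero.mp hkey).resolve_right hF
  have hg0z : g 0 = 0 := by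
    rw [hg1z] at E2
    have hm : g 0 * ν = 0 := by linarith [E2]
    exact (mul_eq_zero.mp hm).resolve_right (ne_of_gt hν)
  have hd0z : deriv g 0 = 0 := by rw [hA', hg0z, mul_zero]
  have hzero : ∀ z ∈ Icc (0:ℝ) 1, g z = 0 := by
    intro z hz
    have w1 := hW₁ z hz
    have w2 := hW₂ z hz
    rw [hg0z, hd0z] at w1 w2
    simp only [zero_mul, mul_zero, add_zero, sub_zero, mul_one] at w1 w2
    have hm : g z * ν = 0 := by
      linear_combination Real.sin (ν*z) * w1 - Real.cos (ν*z) * w2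
        - g z * ν * Real.sin_sq_add_cos_sq (ν*z)
    exact (mul_eq_zero.mp hm).resolve_right (ne_of_gt hν)
  exact hgz₀ (hzero z₀ hz₀)

lemma F_pos (α β ν : ℝ) (hα : 0 < α) (hν : 0 < ν) (hνβ : ν < β) (hβπ : β < π)
    (hrel : 2*π*β^2 = α*(π - β)) :
    0 < (α^2 - ν^2) * Real.sin ν + 2*α*ν*Real.cos ν := by
  have hπ := Real.pi_pos
  set x := ν/2 with hxdef
  have hx0 : 0 < x := by positivity
  have hx2 : x < π/2 := by rw [hxdef]; linarith
  have hsν : Real.sin ν = 2*Real.sin x*Real.cos x := by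
    rw [show ν = 2*x by rw [hxdef]; ring, Real.sin_two_mul]
  have hcν : Real.cos ν = Real.cos x^2 - Real.sin x^2 := by
    rw [show ν = 2*x by rw [hxdef]; ring, Real.cos_two_mul]
    linarith [Real.sin_sq_add_cos_sq x]
  have hsx : 0 < Real.sin x := Real.sin_pos_of_pos_of_lt_pi hx0 (by linarith)
  have hcx : 0 < Real.cos x := Real.cos_pos_of_mem_Ioo ⟨by linarith, hx2⟩
  have hsinle : Real.sin x ≤ x := Real.sin_le hx0.le
  have hchord : 1 - 2/π*x ≤ Real.cos x := Real.one_sub_mul_le_cos hx0.le hx2.le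
  have hchord2 : π - 2*x ≤ π * Real.cos x := by
    have h := mul_le_mul_of_nonneg_left hchord hπ.le
    have he : π*(1 - 2/π*x) = π - 2*x := by field_simp
    linarith [he ▸ h]
  have hν2x : ν = 2*x := by rw [hxdef]; ring
  have hf1 : ν * Real.sin x < α * Real.cos x := by
    have h1 : ν * Real.sin x ≤ ν * x := mul_le_mul_of_nonneg_left hsinle hν.le
    -- π * (ν * x) = π*ν²/2 < π*β²/2 < 2πβ² = α(π−β) < α(π−ν) = α(π−2x) ≤ α π cos x
    have h2 : π * (ν * x) < π * β^2 / 2 := by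
      rw [hxdef]
      nlinarith [mul_pos hπ (mul_pos (sub_pos.2 hνβ) (show (0:ℝ) < β + ν by linarith))]
    have h3 : π * β^2 / 2 < α*(π - β) := by
      nlinarith [mul_pos hπ (mul_pos (hν.trans hνβ) (hν.trans hνβ))]
    have h4 : α*(π - β) < α*(π - ν) := mul_lt_mul_of_pos_left (by linarith) hα
    have h5 : α*(π - 2*x) ≤ α * (π * Real.cos x) := mul_le_mul_of_nonneg_left hchord2 hα.le
    have h6 : π * (ν * Real.sin x) < π * (α * Real.cos x) := by
      rw [hν2x] at h4 ⊢
      nlinarith [mul_le_mul_of_nonneg_left h1 hπ.le]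
    exact lt_of_mul_lt_mul_left h6 hπ.le
  have hf2 : 0 < α*Real.sin x + ν*Real.cos x := by positivity
  have hfac : (α^2 - ν^2) * Real.sin ν + 2*α*ν*Real.cos ν
      = 2*(α*Real.cos x - ν*Real.sin x)*(α*Real.sin x + ν*Real.cos x) := by
    rw [hsν, hcν]; ring
  rw [hfac]
  have : 0 < α*Real.cos x - ν*Real.sin x := by linarith
  positivity

theorem ground_state_lower_bound
    (α Λ₁ : ℝ) (hα : 0 ≤ α)
    (hΛ₁ : IsLeast {Λ : ℝ | IsRobinEigenvalue α Λ} Λ₁) :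
    Λ₁ ≥ ((-α + Real.sqrt (α^2 + 8 * π^2 * α)) / (4 * π))^2 := by
  obtain ⟨hmem, _⟩ := hΛ₁
  have hmem' : IsRobinEigenvalue α Λ₁ := hmem
  have hπ := Real.pi_pos
  rcases eq_or_lt_of_le hα with hα0 | hαpos
  · -- α = 0
    rw [← hα0]
    have : Real.sqrt ((0:ℝ)^2 + 8 * π^2 * 0) = 0 := by norm_num
    rw [this]
    norm_num
    by_contra hcon
    push_neg at hcon
    exact robin_nonpos_aux α Λ₁ hα hmem' (Or.inl hcon)
  · set β := (-α + Real.sqrt (α^2 + 8 * π^2 * α)) / (4 * π) with hβdef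
    show Λ₁ ≥ β^2
    have hnn : (0:ℝ) ≤ α^2 + 8 * π^2 * α := by positivity
    have hsq : Real.sqrt (α^2 + 8 * π^2 * α) ^ 2 = α^2 + 8 * π^2 * α := Real.sq_sqrt hnn
    have hβ0 : 0 < β := by
      rw [hβdef]
      apply div_pos _ (by positivity)
      have h2 : α^2 < α^2 + 8 * π^2 * α := by nlinarith [mul_pos (mul_pos hπ hπ) hαpos]
      have h3 : α < Real.sqrt (α^2 + 8 * π^2 * α) := by
        calc α = Real.sqrt (α^2) := (Real.sqrt_sq hα).symm
          _ < _ := Real.sqrt_lt_sqrt (by positivity) h2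
      linarith
    have h4 : 4 * π * β = -α + Real.sqrt (α^2 + 8 * π^2 * α) := by
      rw [hβdef]; field_simp
    have h5 : (4 * π * β + α)^2 = α^2 + 8 * π^2 * α := by
      rw [show 4 * π * β + α = Real.sqrt (α^2 + 8 * π^2 * α) by linarith, hsq]
    have hrel : 2*π*β^2 = α*(π - β) := by
      have h8 : (8*π) * (2*π*β^2) = (8*π) * (α*(π - β)) := by linear_combination h5
      exact mul_left_cancel₀ (by positivity) h8
    have hβπ : β < π := by
      nlinarith [mul_pos hπ (mul_pos hβ0 hβ0), hrel]
    by_contra hcon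
    push_neg at hcon
    rcases lt_trichotomy Λ₁ 0 with hneg | heq | hpos
    · exact robin_nonpos_aux α Λ₁ hα hmem' (Or.inl hneg)
    · exact robin_nonpos_aux α Λ₁ hα hmem' (Or.inr ⟨heq, hαpos⟩)
    · set ν := Real.sqrt Λ₁ with hνdef
      have hν2 : ν^2 = Λ₁ := Real.sq_sqrt hpos.le
      have hνpos : 0 < ν := Real.sqrt_pos.mpr hpos
      have hνβ : ν < β := by
        nlinarith [hν2, hcon]
      apply robin_wronskian α ν hνpos (by rw [hν2]; exact hmem')
      exact (F_pos α β ν hαpos hνpos hνβ hβπ hrel).ne'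
end

section
/- Let μ₁ ∈ (0, π) be the unique solution of μ tan(μ/2) = α for α > 0. Then μ₁² ≥ ((−α + √(α² + 8π²α))/(4π))². -/
open Real

theorem mu1_sq_ge_lower_bound
    (α μ₁ : ℝ) (hα : 0 < α) (hμ : μ₁ ∈ Set.Ioo 0 π)
    (heq : μ₁ * Real.tan (μ₁ / 2) = α)
    (huniq : ∀ μ ∈ Set.Ioo 0 π, μ * Real.tan (μ / 2) = α → μ = μ₁) :
    μ₁^2 ≥ ((-α + Real.sqrt (α^2 + 8 * π^2 * α)) / (4 * π))^2 := by
  obtain ⟨h0, hπ⟩ := hμ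
  have hπ0 := Real.pi_pos
  have hx0 : (0:ℝ) ≤ μ₁ / 2 := by linarith
  have hx2 : μ₁ / 2 ≤ π / 2 := by linarith
  have hcos : 0 < Real.cos (μ₁ / 2) :=
    Real.cos_pos_of_mem_Ioo ⟨by linarith, by linarith⟩
  have hsin : Real.sin (μ₁ / 2) ≤ μ₁ / 2 := Real.sin_le hx0
  have hcosge : π - μ₁ ≤ π * Real.cos (μ₁ / 2) := by
    have h := Real.one_sub_mul_le_cos hx0 hx2
    have h' := mul_le_mul_of_nonneg_left h hπ0.le
    have hmul : π * (1 - 2 / π * (μ₁ / 2)) = π - μ₁ := by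
      field_simp
    linarith [hmul ▸ h']
  -- α * cos(μ₁/2) = μ₁ * sin(μ₁/2)
  have htan : Real.tan (μ₁ / 2) = Real.sin (μ₁ / 2) / Real.cos (μ₁ / 2) :=
    Real.tan_eq_sin_div_cos _
  have hkey : α * Real.cos (μ₁ / 2) = μ₁ * Real.sin (μ₁ / 2) := by
    rw [← heq, htan]
    field_simp
  -- derive α * (π - μ₁) ≤ π * μ₁^2 / 2
  have h2 : π * α ≤ 2 * π * μ₁ ^ 2 + μ₁ * α := by
    nlinarith [mul_le_mul_of_nonneg_left hcosge hα.le,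
      mul_le_mul_of_nonneg_left hsin (mul_nonneg hπ0.le h0.le), hkey]
  -- sqrt bound
  have hsq : Real.sqrt (α ^ 2 + 8 * π ^ 2 * α) ≤ 4 * π * μ₁ + α := by
    rw [show (4 * π * μ₁ + α) = Real.sqrt ((4 * π * μ₁ + α) ^ 2) from
      (Real.sqrt_sq (by positivity)).symm]
    apply Real.sqrt_le_sqrt
    nlinarith
  have hLnn : 0 ≤ -α + Real.sqrt (α ^ 2 + 8 * π ^ 2 * α) := by
    have h3 : Real.sqrt (α ^ 2) ≤ Real.sqrt (α ^ 2 + 8 * π ^ 2 * α) :=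
      Real.sqrt_le_sqrt (by nlinarith)
    rw [Real.sqrt_sq hα.le] at h3
    linarith
  have hLle : (-α + Real.sqrt (α ^ 2 + 8 * π ^ 2 * α)) / (4 * π) ≤ μ₁ := by
    rw [div_le_iff₀ (by positivity)]
    linarith
  calc ((-α + Real.sqrt (α^2 + 8 * π^2 * α)) / (4 * π))^2
      ≤ μ₁ ^ 2 := by
        apply pow_le_pow_left₀ (by positivity) hLle
  _ = μ₁ ^ 2 := rfl
end

section
/- If f : [0,1] → ℝ is C¹ with f(0) = f(1) = 0 and ∫₀¹ (f')² dz = π² ∫₀¹ f² dz with f not identically zero, then f(z) = c sin(πz) for some constant c. -/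
open Real intervalIntegral Set Filter Topology MeasureTheory

theorem poincare_equality_case
    (f : ℝ → ℝ) (hf : ContDiff ℝ 1 f)
    (h0 : f 0 = 0) (h1 : f 1 = 0)
    (hne : ∃ z ∈ Set.Icc (0:ℝ) 1, f z ≠ 0)
    (heq : (∫ z in (0:ℝ)..1, (deriv f z)^2) = π^2 * ∫ z in (0:ℝ)..1, (f z)^2) :
    ∃ c : ℝ, ∀ z ∈ Set.Icc (0:ℝ) 1, f z = c * Real.sin (π * z) := by
  clear hne
  have hfc : Continuous f := hf.continuous
  have hfd : ∀ z, HasDerivAt f (deriv f z) z := fun z => (hf.differentiable one_ne_zero z).hasDerivAt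
  have hf'c : Continuous (deriv f) := hf.continuous_deriv le_rfl
  have hsinc : Continuous fun x : ℝ => Real.sin (π*x) := by fun_prop
  have hcosc : Continuous fun x : ℝ => Real.cos (π*x) := by fun_prop
  have hsinpos : ∀ z ∈ Ioo (0:ℝ) 1, 0 < Real.sin (π*z) := fun z hz =>
    Real.sin_pos_of_pos_of_lt_pi (by nlinarith [pi_pos, hz.1]) (by nlinarith [pi_pos, hz.2])
  have hsinD : ∀ z : ℝ, HasDerivAt (fun x => Real.sin (π*x)) (Real.cos (π*z) * (π*1)) z :=
    fun z => (Real.hasDerivAt_sin (π*z)).comp z ((hasDerivAt_id z).const_mul π)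
  have hcosD : ∀ z : ℝ, HasDerivAt (fun x => Real.cos (π*x)) (-Real.sin (π*z) * (π*1)) z :=
    fun z => (Real.hasDerivAt_cos (π*z)).comp z ((hasDerivAt_id z).const_mul π)
  set φ : ℝ → ℝ := fun z => (deriv f z)^2 - π^2 * (f z)^2 with hφdef
  set h : ℝ → ℝ := fun z => deriv f z * Real.sin (π*z) - π * f z * Real.cos (π*z) with hhdef
  set ρ : ℝ → ℝ := fun z => (h z)^2 / (Real.sin (π*z))^2 with hρdef
  set P : ℝ → ℝ := fun x => π * ((f x)^2 * (Real.cos (π*x) / Real.sin (π*x))) with hPdef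
  set F : ℝ → ℝ := fun x => ∫ t in (0:ℝ)..x, φ t with hFdef
  have hφcont : Continuous φ := (hf'c.pow 2).sub (continuous_const.mul (hfc.pow 2))
  have hhcont : Continuous h := (hf'c.mul hsinc).sub ((continuous_const.mul hfc).mul hcosc)
  have hρnonneg : ∀ z, 0 ≤ ρ z := fun z => div_nonneg (sq_nonneg _) (sq_nonneg _)
  -- derivative of P on (0,1)
  have hP : ∀ z ∈ Ioo (0:ℝ) 1, HasDerivAt P (φ z - ρ z) z := by
    intro z hz
    have hsz : Real.sin (π*z) ≠ 0 := ne_of_gt (hsinpos z hz)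
    have hsq : HasDerivAt (fun x => (f x)^2) ((2:ℕ) * f z ^ 1 * deriv f z) z := (hfd z).pow 2
    have hcot := (hcosD z).div (hsinD z) hsz
    have hd := (hsq.mul hcot).const_mul π
    refine hd.congr_deriv (Eq.symm ?_)
    have hpyth := Real.sin_sq_add_cos_sq (π*z)
    simp only [hφdef, hρdef, hhdef, Pi.div_apply]
    field_simp
    ring
  -- key integral identity
  have hkey : ∀ a ∈ Ioo (0:ℝ) 1, ∀ b ∈ Ioo (0:ℝ) 1, a ≤ b →
      (∫ z in a..b, ρ z) = (F b - P b) - (F a - P a) := by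
    intro a ha b hb hab
    have hsub : Set.uIcc a b ⊆ Ioo (0:ℝ) 1 := by
      rw [Set.uIcc_of_le hab]
      exact fun x hx => ⟨lt_of_lt_of_le ha.1 hx.1, lt_of_le_of_lt hx.2 hb.2⟩
    have hρconts : ContinuousOn ρ (Set.uIcc a b) := by
      apply ContinuousOn.div (hhcont.pow 2).continuousOn (hsinc.pow 2).continuousOn
      intro x hx
      exact pow_ne_zero _ (ne_of_gt (hsinpos x (hsub hx)))
    have hint1 : IntervalIntegrable φ volume a b := hφcont.intervalIntegrable a b
    have hint2 : IntervalIntegrable ρ volume a b := hρconts.intervalIntegrable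
    have heq2 : (∫ z in a..b, (φ z - ρ z)) = P b - P a :=
      intervalIntegral.integral_eq_sub_of_hasDerivAt (fun z hz => hP z (hsub hz))
        (hint1.sub hint2)
    have heq3 : (∫ z in a..b, φ z) = F b - F a := by
      rw [hFdef]
      exact (intervalIntegral.integral_interval_sub_left (hφcont.intervalIntegrable 0 b)
        (hφcont.intervalIntegrable 0 a)).symm
    rw [intervalIntegral.integral_sub hint1 hint2, heq3] at heq2
    linarith
  -- F facts
  have hFderiv : ∀ x : ℝ, HasDerivAt F (φ x) x := fun x =>
    (hφcont.integral_hasStrictDerivAt 0 x).hasDerivAt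
  have hFcont : Continuous F := continuous_iff_continuousAt.mpr fun x => (hFderiv x).continuousAt
  have hF0 : F 0 = 0 := intervalIntegral.integral_same
  have hF1 : F 1 = 0 := by
    have hi1 : IntervalIntegrable (fun z => (deriv f z)^2) volume 0 1 :=
      (hf'c.pow 2).intervalIntegrable 0 1
    have hi2 : IntervalIntegrable (fun z => π^2 * (f z)^2) volume 0 1 :=
      (continuous_const.mul (hfc.pow 2)).intervalIntegrable 0 1
    have hs : F 1 = (∫ z in (0:ℝ)..1, (deriv f z)^2) - ∫ z in (0:ℝ)..1, π^2 * (f z)^2 :=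
      intervalIntegral.integral_sub hi1 hi2
    rw [intervalIntegral.integral_const_mul] at hs
    rw [hs, heq]; ring
  -- limits of P at the endpoints
  have hmono0 : 𝓝[>] (0:ℝ) ≤ 𝓝[≠] (0:ℝ) :=
    nhdsWithin_mono 0 (fun x hx => by simpa using ne_of_gt hx)
  have hmono1 : 𝓝[<] (1:ℝ) ≤ 𝓝[≠] (1:ℝ) :=
    nhdsWithin_mono 1 (fun x hx => by simpa using ne_of_lt hx)
  have hslopef0 : Tendsto (fun a => f a / a) (𝓝[>] (0:ℝ)) (𝓝 (deriv f 0)) := by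
    refine ((hasDerivAt_iff_tendsto_slope.mp (hfd 0)).mono_left hmono0).congr fun a => ?_
    simp [slope_def_field, h0]
  have hslopes0 : Tendsto (fun a => Real.sin (π*a) / a) (𝓝[>] (0:ℝ)) (𝓝 π) := by
    have hD : HasDerivAt (fun x => Real.sin (π*x)) π 0 := by simpa using hsinD 0
    refine ((hasDerivAt_iff_tendsto_slope.mp hD).mono_left hmono0).congr fun a => ?_
    simp [slope_def_field]
  have hratio0 : Tendsto (fun a => a / Real.sin (π*a)) (𝓝[>] (0:ℝ)) (𝓝 π⁻¹) := by
    refine (hslopes0.inv₀ pi_ne_zero).congr fun a => ?_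
    rw [inv_div]
  have hcos0 : Tendsto (fun a => Real.cos (π*a)) (𝓝[>] (0:ℝ)) (𝓝 1) := by
    simpa using (hcosc.tendsto 0).mono_left nhdsWithin_le_nhds
  have hf0' : Tendsto f (𝓝[>] (0:ℝ)) (𝓝 0) := by
    simpa [h0] using (hfc.tendsto 0).mono_left nhdsWithin_le_nhds
  have hP0 : Tendsto P (𝓝[>] (0:ℝ)) (𝓝 0) := by
    have hprod : Tendsto (fun a => (π * Real.cos (π*a)) * ((f a / a) * f a * (a / Real.sin (π*a))))
        (𝓝[>] (0:ℝ)) (𝓝 ((π * 1) * ((deriv f 0) * 0 * π⁻¹))) :=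
      (tendsto_const_nhds.mul hcos0).mul ((hslopef0.mul hf0').mul hratio0)
    have hv : ((π*1) * ((deriv f 0) * 0 * π⁻¹)) = 0 := by ring
    rw [hv] at hprod
    refine hprod.congr' ?_
    filter_upwards [Ioo_mem_nhdsGT_of_mem (Set.left_mem_Ico.mpr one_pos)] with a ha
    have ha0 : a ≠ 0 := ne_of_gt ha.1
    have hsa : Real.sin (π*a) ≠ 0 := ne_of_gt (hsinpos a ha)
    simp only [hPdef]
    field_simp
  have hslopef1 : Tendsto (fun b => f b / (b - 1)) (𝓝[<] (1:ℝ)) (𝓝 (deriv f 1)) := by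
    refine ((hasDerivAt_iff_tendsto_slope.mp (hfd 1)).mono_left hmono1).congr fun b => ?_
    simp [slope_def_field, h1]
  have hslopes1 : Tendsto (fun b => Real.sin (π*b) / (b - 1)) (𝓝[<] (1:ℝ)) (𝓝 (-π)) := by
    have hD : HasDerivAt (fun x => Real.sin (π*x)) (-π) 1 := by simpa using hsinD 1
    refine ((hasDerivAt_iff_tendsto_slope.mp hD).mono_left hmono1).congr fun b => ?_
    simp [slope_def_field]
  have hratio1 : Tendsto (fun b => (b - 1) / Real.sin (π*b)) (𝓝[<] (1:ℝ)) (𝓝 (-π)⁻¹) := by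
    refine (hslopes1.inv₀ (neg_ne_zero.mpr pi_ne_zero)).congr fun b => ?_
    rw [inv_div]
  have hcos1 : Tendsto (fun b => Real.cos (π*b)) (𝓝[<] (1:ℝ)) (𝓝 (-1)) := by
    have := (hcosc.tendsto 1).mono_left (nhdsWithin_le_nhds : 𝓝[<] (1:ℝ) ≤ 𝓝 1)
    simpa using this
  have hf1' : Tendsto f (𝓝[<] (1:ℝ)) (𝓝 0) := by
    simpa [h1] using (hfc.tendsto 1).mono_left (nhdsWithin_le_nhds : 𝓝[<] (1:ℝ) ≤ 𝓝 1)
  have hP1 : Tendsto P (𝓝[<] (1:ℝ)) (𝓝 0) := by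
    have hprod : Tendsto (fun b => (π * Real.cos (π*b)) * ((f b / (b-1)) * f b * ((b-1) / Real.sin (π*b))))
        (𝓝[<] (1:ℝ)) (𝓝 ((π * (-1)) * ((deriv f 1) * 0 * (-π)⁻¹))) :=
      (tendsto_const_nhds.mul hcos1).mul ((hslopef1.mul hf1').mul hratio1)
    have hv : ((π * (-1)) * ((deriv f 1) * 0 * (-π)⁻¹)) = 0 := by ring
    rw [hv] at hprod
    refine hprod.congr' ?_
    filter_upwards [Ioo_mem_nhdsLT_of_mem (Set.right_mem_Ioc.mpr one_pos)] with b hb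
    have hb1 : b - 1 ≠ 0 := sub_ne_zero.mpr (ne_of_lt hb.2)
    have hsb : Real.sin (π*b) ≠ 0 := ne_of_gt (hsinpos b hb)
    simp only [hPdef]
    field_simp
  -- Q := F - P is monotone with limits 0, hence 0
  have hQ0 : Tendsto (fun a => F a - P a) (𝓝[>] (0:ℝ)) (𝓝 0) := by
    have hF' : Tendsto F (𝓝[>] (0:ℝ)) (𝓝 0) := by
      simpa [hF0] using (hFcont.tendsto 0).mono_left nhdsWithin_le_nhds
    simpa using hF'.sub hP0
  have hQ1 : Tendsto (fun b => F b - P b) (𝓝[<] (1:ℝ)) (𝓝 0) := by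
    have hF' : Tendsto F (𝓝[<] (1:ℝ)) (𝓝 0) := by
      simpa [hF1] using (hFcont.tendsto 1).mono_left (nhdsWithin_le_nhds : 𝓝[<] (1:ℝ) ≤ 𝓝 1)
    simpa using hF'.sub hP1
  have hQle : ∀ a ∈ Ioo (0:ℝ) 1, ∀ b ∈ Ioo (0:ℝ) 1, a ≤ b → F a - P a ≤ F b - P b := by
    intro a ha b hb hab
    have h1' := hkey a ha b hb hab
    have h2' : 0 ≤ ∫ z in a..b, ρ z :=
      intervalIntegral.integral_nonneg hab (fun u _ => hρnonneg u)
    linarith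
  have hQzero : ∀ z ∈ Ioo (0:ℝ) 1, F z - P z = 0 := by
    intro z hz
    have hge : 0 ≤ F z - P z := by
      refine le_of_tendsto hQ0 ?_
      filter_upwards [Ioo_mem_nhdsGT_of_mem (Set.left_mem_Ico.mpr hz.1)] with a ha
      exact hQle a ⟨ha.1, lt_trans ha.2 hz.2⟩ z hz (le_of_lt ha.2)
    have hle : F z - P z ≤ 0 := by
      refine ge_of_tendsto hQ1 ?_
      filter_upwards [Ioo_mem_nhdsLT_of_mem (Set.right_mem_Ioc.mpr hz.2)] with b hb
      exact hQle z hz b ⟨lt_trans hz.1 hb.1, hb.2⟩ (le_of_lt hb.1)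
    linarith
  -- h vanishes on (0,1)
  have hhzero : ∀ z ∈ Ioo (0:ℝ) 1, h z = 0 := by
    intro z hz
    by_contra hne'
    have hopen : IsOpen ((h ⁻¹' {0}ᶜ) ∩ Ioo 0 1) :=
      (isOpen_compl_singleton.preimage hhcont).inter isOpen_Ioo
    have hmem : z ∈ (h ⁻¹' {0}ᶜ) ∩ Ioo 0 1 := ⟨by simpa using hne', hz⟩
    obtain ⟨ε, hε, hball⟩ := Metric.isOpen_iff.mp hopen z hmem
    set u := z - ε/2 with hudef
    set v := z + ε/2 with hvdef
    have huv : ∀ x ∈ Set.Icc u v, x ∈ (h ⁻¹' {0}ᶜ) ∩ Ioo 0 1 := by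
      intro x hx
      apply hball
      rw [Metric.mem_ball, Real.dist_eq, abs_sub_lt_iff]
      constructor
      · have := hx.2; rw [hvdef] at this; linarith
      · have := hx.1; rw [hudef] at this; linarith
    have hlt : u < v := by rw [hudef, hvdef]; linarith
    have hu : u ∈ Ioo (0:ℝ) 1 := (huv u ⟨le_refl u, hlt.le⟩).2
    have hv : v ∈ Ioo (0:ℝ) 1 := (huv v ⟨hlt.le, le_refl v⟩).2
    have hpos : 0 < ∫ x in u..v, ρ x := by
      apply intervalIntegral.intervalIntegral_pos_of_pos_on
      · apply ContinuousOn.intervalIntegrable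
        apply ContinuousOn.div (hhcont.pow 2).continuousOn (hsinc.pow 2).continuousOn
        intro x hx
        rw [Set.uIcc_of_le hlt.le] at hx
        exact pow_ne_zero _ (ne_of_gt (hsinpos x (huv x hx).2))
      · intro x hx
        have hx' := huv x ⟨hx.1.le, hx.2.le⟩
        have hx0 : h x ≠ 0 := by simpa using hx'.1
        exact div_pos (lt_of_le_of_ne (sq_nonneg _) (Ne.symm (pow_ne_zero 2 hx0)))
          (pow_pos (hsinpos x hx'.2) 2)
      · exact hlt
    have hzero : (∫ x in u..v, ρ x) = 0 := by
      rw [hkey u hu v hv hlt.le, hQzero u hu, hQzero v hv]; ring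
    linarith
  -- g = f / sin(πx) is locally constant on (0,1)
  set g : ℝ → ℝ := fun x => f x / Real.sin (π*x) with hgdef
  have hgderiv : ∀ z ∈ Ioo (0:ℝ) 1, HasDerivAt g 0 z := by
    intro z hz
    have hsz : Real.sin (π*z) ≠ 0 := ne_of_gt (hsinpos z hz)
    have hd := (hfd z).div (hsinD z) hsz
    refine hd.congr_deriv (Eq.symm ?_)
    have hz0 := hhzero z hz
    simp only [hhdef] at hz0
    rw [eq_comm, div_eq_zero_iff]
    left
    linear_combination hz0
  have hgconst : ∀ z ∈ Ioo (0:ℝ) 1, g z = g (1/2) := by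
    have half : (1/2:ℝ) ∈ Ioo (0:ℝ) 1 := by norm_num
    have main : ∀ a ∈ Ioo (0:ℝ) 1, ∀ b ∈ Ioo (0:ℝ) 1, a ≤ b → ∀ x ∈ Set.Icc a b, g x = g a := by
      intro a ha b hb hab
      have hsub : Set.Icc a b ⊆ Ioo (0:ℝ) 1 := fun x hx =>
        ⟨lt_of_lt_of_le ha.1 hx.1, lt_of_le_of_lt hx.2 hb.2⟩
      apply constant_of_has_deriv_right_zero
      · apply ContinuousOn.div hfc.continuousOn hsinc.continuousOn
        intro x hx
        exact ne_of_gt (hsinpos x (hsub hx))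
      · intro x hx
        exact (hgderiv x (hsub ⟨hx.1, hx.2.le⟩)).hasDerivWithinAt
    intro z hz
    rcases le_total z (1/2) with hle | hle
    · exact (main z hz (1/2) half hle (1/2) ⟨hle, le_refl _⟩).symm
    · exact main (1/2) half z hz hle z ⟨hle, le_refl _⟩
  refine ⟨g (1/2), fun z hz => ?_⟩
  rcases eq_or_lt_of_le hz.1 with h0z | h0z
  · rw [← h0z, h0, mul_zero, Real.sin_zero, mul_zero]
  rcases eq_or_lt_of_le hz.2 with hz1 | hz1
  · rw [hz1, h1, mul_one, Real.sin_pi, mul_zero]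
  have hzI : z ∈ Ioo (0:ℝ) 1 := ⟨h0z, hz1⟩
  have hsz : Real.sin (π*z) ≠ 0 := ne_of_gt (hsinpos z hzI)
  calc f z = g z * Real.sin (π*z) := (div_mul_cancel₀ _ hsz).symm
    _ = g (1/2) * Real.sin (π*z) := by rw [hgconst z hzI]
end
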